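/- The critical value of the spherical pendulum equals 1: the function u₊: S^n → ℝ defined by u₊(x) = ∫_{x_{n+1}}^1 √((2−2s)/(1−s²)) ds satisfies u₊ ≺ L+1, and conversely, if some function u: S^n → ℝ satisfies u ≺ L+c for some c ∈ ℝ, then c ≥ 1. In particular inf{ c ∈ ℝ : there exists u: S^n → ℝ with u ≺ L+c } = 1. -/

import Mathlib

open Set

noncomputable section

namespace SphericalPendulum

variable (n : ℕ)

/-- The ambient Euclidean space `ℝ^{n+1}`. -/
abbrev Amb := EuclideanSpace ℝ (Fin (n + 1))

/-- The unit sphere `S^n ⊂ ℝ^{n+1}`. -/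
abbrev Sph := Metric.sphere (0 : Amb n) 1

/-- The last coordinate `x_{n+1}` of a point of `ℝ^{n+1}`. -/
def lastCoord (x : Amb n) : ℝ := x (Fin.last n)

/-- The spherical-pendulum Lagrangian `L(x,v) = ½‖v‖² − x_{n+1}`. -/
def Lsph (x v : Amb n) : ℝ := ‖v‖ ^ 2 / 2 - lastCoord n x

/-- Velocity of a curve in the sphere, computed in the ambient space. -/
def sVel (γ : ℝ → Sph n) (s : ℝ) : Amb n := deriv (fun t : ℝ => (γ t : Amb n)) s

/-- Piecewise `C¹` curve `γ : [a,b] → S^n`. -/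
def sPiecewiseC1On (γ : ℝ → Sph n) (a b : ℝ) : Prop :=
  ContinuousOn (fun t : ℝ => (γ t : Amb n)) (Icc a b) ∧
    ∃ (k : ℕ) (t : Fin (k + 1) → ℝ), StrictMono t ∧ t 0 = a ∧ t (Fin.last k) = b ∧
      ∀ i : Fin k, ContDiffOn ℝ 1 (fun s : ℝ => (γ s : Amb n))
        (Icc (t i.castSucc) (t i.succ))

/-- The action `A_L(γ) = ∫_a^b L(γ(s), γ̇(s)) ds` of a curve `γ : [a,b] → S^n`. -/
def sAction (γ : ℝ → Sph n) (a b : ℝ) : ℝ :=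
  ∫ s in a..b, Lsph n (γ s : Amb n) (sVel n γ s)

/-- `u ≺ L + c` : `u` is dominated by `L + c`. -/
def sDominated (c : ℝ) (u : Sph n → ℝ) : Prop :=
  ∀ (γ : ℝ → Sph n) (a b : ℝ), a ≤ b → sPiecewiseC1On n γ a b →
    u (γ b) - u (γ a) ≤ sAction n γ a b + c * (b - a)

/-- The weak KAM solution `u₊(x) = ∫_{x_{n+1}}^1 √((2−2s)/(1−s²)) ds`. -/
def uPlus (x : Sph n) : ℝ :=
  ∫ s in (lastCoord n (x : Amb n))..1, Real.sqrt ((2 - 2 * s) / (1 - s ^ 2))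

/-- Backward weak KAM solution for the value `c`, for the spherical pendulum. -/
def sBackwardWeakKAM (c : ℝ) (u : Sph n → ℝ) : Prop :=
  sDominated n c u ∧
    ∀ x : Sph n, ∃ γ : ℝ → Sph n, γ 0 = x ∧
      ContDiffOn ℝ 1 (fun s : ℝ => (γ s : Amb n)) (Iic 0) ∧
      ∀ t : ℝ, 0 ≤ t → u x - u (γ (-t)) = sAction n γ (-t) 0 + c * t

/-- The north pole `N = (0,…,0,1) ∈ S^n`. -/
def northPole : Sph n :=
  ⟨EuclideanSpace.single (Fin.last n) (1 : ℝ), by simp⟩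


section Helpers
open MeasureTheory intervalIntegral Filter

lemma ae_ne_vol (d : ℝ) : ∀ᵐ s : ℝ ∂volume, s ≠ d := by
  rw [ae_iff]
  have h : {a : ℝ | ¬ a ≠ d} = {d} := by ext a; simp
  rw [h]; exact Real.volume_singleton

lemma lastCoord_inner (x : Amb n) :
    lastCoord n x = (inner ℝ (EuclideanSpace.single (Fin.last n) (1:ℝ)) x : ℝ) := by
  simp [lastCoord, EuclideanSpace.inner_single_left]

lemma abs_lastCoord_le (x : Amb n) : |lastCoord n x| ≤ ‖x‖ := by
  rw [lastCoord_inner]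
  calc |(inner ℝ (EuclideanSpace.single (Fin.last n) (1:ℝ)) x : ℝ)|
      ≤ ‖EuclideanSpace.single (Fin.last n) (1:ℝ)‖ * ‖x‖ := abs_real_inner_le_norm _ _
    _ = ‖x‖ := by rw [EuclideanSpace.norm_single]; simp

lemma sph_norm (x : Sph n) : ‖(x : Amb n)‖ = 1 := mem_sphere_zero_iff_norm.mp x.2

lemma lastCoord_mem (x : Sph n) :
    -1 ≤ lastCoord n (x : Amb n) ∧ lastCoord n (x : Amb n) ≤ 1 := by
  have h := abs_lastCoord_le n (x : Amb n)
  rw [sph_norm] at h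
  exact abs_le.mp h

lemma integral_sqrt_eq {r : ℝ} (h1 : -1 ≤ r) (h2 : r ≤ 1) :
    (∫ s in r..1, Real.sqrt ((2 - 2 * s) / (1 - s ^ 2))) =
      4 - 2 * Real.sqrt 2 * Real.sqrt (1 + r) := by
  have hcongr : (∫ s in r..1, Real.sqrt ((2 - 2 * s) / (1 - s ^ 2))) =
      ∫ s in r..1, Real.sqrt 2 * (s + 1) ^ (-(1/2) : ℝ) := by
    apply intervalIntegral.integral_congr_ae
    filter_upwards [ae_ne_vol 1] with s hs hmem
    rw [uIoc_of_le h2] at hmem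
    have hs1 : s < 1 := lt_of_le_of_ne hmem.2 hs
    have hs0 : -1 < s := lt_of_le_of_lt h1 hmem.1
    have hpos : (0:ℝ) < s + 1 := by linarith
    have hq : (2 - 2*s)/(1 - s^2) = 2/(s+1) := by
      rw [div_eq_div_iff (by nlinarith) (by linarith)]; ring
    rw [hq, Real.sqrt_div' 2 hpos.le, Real.rpow_neg hpos.le, ← Real.sqrt_eq_rpow,
      div_eq_mul_inv]
  have h3 : (∫ s in r..1, Real.sqrt 2 * (s + 1) ^ (-(1/2) : ℝ)) =
      Real.sqrt 2 * ∫ s in (r+1)..(2:ℝ), s ^ (-(1/2) : ℝ) := by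
    rw [intervalIntegral.integral_const_mul]
    beta_reduce
    congr 1
    have := intervalIntegral.integral_comp_add_right (a := r) (b := 1)
      (fun x : ℝ => x ^ (-(1/2) : ℝ)) 1
    norm_num at this
    simpa using this
  have h4 : (∫ s in (r+1)..(2:ℝ), s ^ (-(1/2) : ℝ)) =
      ((2:ℝ) ^ ((1:ℝ)/2) - (r+1) ^ ((1:ℝ)/2)) / (1/2) := by
    have := integral_rpow (a := r+1) (b := 2) (Or.inl (by norm_num : (-1:ℝ) < -(1/2)))
    norm_num at this ⊢
    convert this using 2 <;> norm_num
  rw [hcongr, h3, h4, ← Real.sqrt_eq_rpow, ← Real.sqrt_eq_rpow]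
  have h5 : Real.sqrt 2 * Real.sqrt 2 = 2 := Real.mul_self_sqrt (by norm_num)
  have h6 : Real.sqrt (r+1) = Real.sqrt (1+r) := by rw [add_comm]
  rw [h6]
  field_simp
  nlinarith [h5]

lemma arith_bound {r w m ε : ℝ} (h1 : -1 ≤ r) (h2 : r ≤ 1) (hε : 0 < ε)
    (hm : 0 ≤ m) (hw : |w| ≤ m * Real.sqrt (1 - r^2)) :
    -(2*Real.sqrt 2) * (1/(2*Real.sqrt (1+r+ε)) * w) ≤ m^2/2 - r + 1 := by
  have h1r : (0:ℝ) ≤ 1 + r := by linarith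
  have h1r' : (0:ℝ) ≤ 1 - r := by linarith
  have hs1 : 0 < Real.sqrt (1+r+ε) := Real.sqrt_pos.mpr (by linarith)
  have hfac : Real.sqrt (1 - r^2) = Real.sqrt (1-r) * Real.sqrt (1+r) := by
    rw [← Real.sqrt_mul h1r']; ring_nf
  have hle : Real.sqrt (1+r) ≤ Real.sqrt (1+r+ε) := Real.sqrt_le_sqrt (by linarith)
  have key : Real.sqrt 2 * (m * Real.sqrt (1-r)) ≤ m^2/2 + (1-r) := by
    nlinarith [sq_nonneg (m - Real.sqrt 2 * Real.sqrt (1-r)), Real.sqrt_nonneg (1-r),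
      Real.sqrt_nonneg 2, Real.sq_sqrt h1r', Real.sq_sqrt (by norm_num : (0:ℝ) ≤ 2)]
  have hW : -(Real.sqrt 2) * w ≤ (m^2/2 - r + 1) * Real.sqrt (1+r+ε) := by
    have c1 : -(Real.sqrt 2) * w ≤ Real.sqrt 2 * |w| := by
      have := neg_le_abs w
      nlinarith [Real.sqrt_nonneg 2]
    have c2 : Real.sqrt 2 * |w| ≤ Real.sqrt 2 * (m * (Real.sqrt (1-r) * Real.sqrt (1+r))) := by
      have := hw
      rw [hfac] at this
      nlinarith [Real.sqrt_nonneg 2]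
    have c3 : Real.sqrt 2 * (m * (Real.sqrt (1-r) * Real.sqrt (1+r)))
        = (Real.sqrt 2 * (m * Real.sqrt (1-r))) * Real.sqrt (1+r) := by ring
    have c4 : (Real.sqrt 2 * (m * Real.sqrt (1-r))) * Real.sqrt (1+r)
        ≤ (m^2/2 + (1-r)) * Real.sqrt (1+r) :=
      mul_le_mul_of_nonneg_right key (Real.sqrt_nonneg _)
    have c5 : (m^2/2 + (1-r)) * Real.sqrt (1+r) ≤ (m^2/2 - r + 1) * Real.sqrt (1+r+ε) := by
      have hco : (0:ℝ) ≤ m^2/2 + (1-r) := by positivity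
      have : (m^2/2 + (1-r)) * Real.sqrt (1+r) ≤ (m^2/2 + (1-r)) * Real.sqrt (1+r+ε) :=
        mul_le_mul_of_nonneg_left hle hco
      calc (m^2/2 + (1-r)) * Real.sqrt (1+r) ≤ (m^2/2 + (1-r)) * Real.sqrt (1+r+ε) := this
        _ = (m^2/2 - r + 1) * Real.sqrt (1+r+ε) := by ring
    linarith
  have heq : -(2*Real.sqrt 2) * (1/(2*Real.sqrt (1+r+ε)) * w)
      = (-(Real.sqrt 2) * w) / Real.sqrt (1+r+ε) := by
    field_simp
  rw [heq, div_le_iff₀ hs1]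
  exact hW



lemma uPlus_eq (x : Sph n) :
    uPlus n x = 4 - 2 * Real.sqrt 2 * Real.sqrt (1 + lastCoord n (x : Amb n)) := by
  have h := lastCoord_mem n x
  exact integral_sqrt_eq h.1 h.2

lemma vel_coord_bound (x v : Amb n) (hx : ‖x‖ = 1) (hxv : (inner ℝ x v : ℝ) = 0) :
    |v (Fin.last n)| ≤ ‖v‖ * Real.sqrt (1 - (lastCoord n x)^2) := by
  set e : Amb n := EuclideanSpace.single (Fin.last n) (1:ℝ) with he
  set r : ℝ := lastCoord n x with hrdef
  have hv : v (Fin.last n) = (inner ℝ (e - r • x) v : ℝ) := by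
    rw [inner_sub_left, real_inner_smul_left, hxv]
    simp [he, EuclideanSpace.inner_single_left]
  have hex : (inner ℝ e x : ℝ) = r := by
    rw [hrdef, lastCoord_inner n x, he]
  have hnorm : ‖e - r • x‖ = Real.sqrt (1 - r^2) := by
    have hsq : ‖e - r • x‖^2 = 1 - r^2 := by
      rw [norm_sub_sq_real, real_inner_smul_right, hex, norm_smul, hx]
      have hne : ‖e‖ = 1 := by rw [he, EuclideanSpace.norm_single]; simp
      rw [hne]
      simp [sq_abs]
      ring
    rw [← hsq, Real.sqrt_sq (norm_nonneg _)]
  calc |v (Fin.last n)| = |(inner ℝ (e - r • x) v : ℝ)| := by rw [hv]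
    _ ≤ ‖e - r • x‖ * ‖v‖ := abs_real_inner_le_norm _ _
    _ = ‖v‖ * Real.sqrt (1 - r^2) := by rw [hnorm]; ring


lemma piece_estimate (γ : ℝ → Sph n) {c d : ℝ} (hcd : c < d)
    (hC1 : ContDiffOn ℝ 1 (fun s : ℝ => (γ s : Amb n)) (Icc c d)) :
    IntervalIntegrable (fun s => Lsph n (γ s : Amb n) (sVel n γ s) + 1) volume c d ∧
      uPlus n (γ d) - uPlus n (γ c) ≤
        ∫ s in c..d, (Lsph n (γ s : Amb n) (sVel n γ s) + 1) := by
  set Γ : ℝ → Amb n := fun s => (γ s : Amb n) with hΓdef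
  set W : ℝ → Amb n := derivWithin Γ (Icc c d) with hWdef
  have hWcont : ContinuousOn W (Icc c d) :=
    hC1.continuousOn_derivWithin (uniqueDiffOn_Icc hcd) le_rfl
  have hΓcont : ContinuousOn Γ (Icc c d) := hC1.continuousOn
  have hderivAt : ∀ t ∈ Ioo c d, HasDerivAt Γ (W t) t := by
    intro t ht
    have hnh : Icc c d ∈ nhds t := Icc_mem_nhds ht.1 ht.2
    have hdA : DifferentiableAt ℝ Γ t :=
      ((hC1.differentiableOn one_ne_zero) t (Ioo_subset_Icc_self ht)).differentiableAt hnh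
    have hW : W t = deriv Γ t := derivWithin_of_mem_nhds hnh
    rw [hW]; exact hdA.hasDerivAt
  have hWvel : ∀ t ∈ Ioo c d, sVel n γ t = W t := by
    intro t ht
    have : deriv Γ t = W t := (hderivAt t ht).deriv
    exact this
  have hnormΓ : ∀ t, ‖Γ t‖ = 1 := fun t => sph_norm n (γ t)
  have horth : ∀ t ∈ Ioo c d, (inner ℝ (Γ t) (W t) : ℝ) = 0 := by
    intro t ht
    have h1 : HasDerivAt (fun s => (inner ℝ (Γ s) (Γ s) : ℝ))
        ((inner ℝ (Γ t) (W t) : ℝ) + (inner ℝ (W t) (Γ t) : ℝ)) t :=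
      (hderivAt t ht).inner ℝ (hderivAt t ht)
    have h2 : (fun s => (inner ℝ (Γ s) (Γ s) : ℝ)) = fun _ => (1:ℝ) := by
      funext s; rw [real_inner_self_eq_norm_mul_norm, hnormΓ]; norm_num
    rw [h2] at h1
    have h3 : (inner ℝ (Γ t) (W t) : ℝ) + (inner ℝ (W t) (Γ t) : ℝ) = 0 :=
      h1.unique (hasDerivAt_const t 1)
    have h4 : (inner ℝ (W t) (Γ t) : ℝ) = inner ℝ (Γ t) (W t) := real_inner_comm _ _
    linarith [h3, h4]
  set rr : ℝ → ℝ := fun s => lastCoord n (Γ s) with hrrdef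
  have hrmem : ∀ s, -1 ≤ rr s ∧ rr s ≤ 1 := fun s => lastCoord_mem n (γ s)
  have hrreq : rr = fun s => (inner ℝ (EuclideanSpace.single (Fin.last n) (1:ℝ)) (Γ s) : ℝ) :=
    funext fun s => lastCoord_inner n (Γ s)
  have hrcont : ContinuousOn rr (Icc c d) := by
    rw [hrreq]
    exact ContinuousOn.inner continuousOn_const hΓcont
  have hrderiv : ∀ t ∈ Ioo c d, HasDerivAt rr (W t (Fin.last n)) t := by
    intro t ht
    have h := (hasDerivAt_const t
      (EuclideanSpace.single (Fin.last n) (1:ℝ) : Amb n)).inner ℝ (hderivAt t ht)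
    rw [hrreq]
    refine h.congr_deriv ?_
    simp [EuclideanSpace.inner_single_left]
  set ℓ : ℝ → ℝ := fun s => ‖W s‖^2/2 - rr s + 1 with hℓdef
  have hℓcont : ContinuousOn ℓ (Icc c d) :=
    (((hWcont.norm.pow 2).div_const 2).sub hrcont).add continuousOn_const
  have hLeq : ∀ t ∈ Ioo c d, Lsph n (γ t : Amb n) (sVel n γ t) + 1 = ℓ t := by
    intro t ht
    simp only [Lsph, hℓdef, hWvel t ht]
    rfl
  have hint2 : IntervalIntegrable ℓ volume c d := by
    apply ContinuousOn.intervalIntegrable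
    rwa [uIcc_of_le hcd.le]
  have haeeq : ∀ᵐ s ∂volume, s ∈ uIoc c d →
      (Lsph n (γ s : Amb n) (sVel n γ s) + 1) = ℓ s := by
    filter_upwards [ae_ne_vol d] with s hs hmem
    rw [uIoc_of_le hcd.le] at hmem
    exact hLeq s ⟨hmem.1, lt_of_le_of_ne hmem.2 hs⟩
  have hII : IntervalIntegrable (fun s => Lsph n (γ s : Amb n) (sVel n γ s) + 1) volume c d := by
    rw [intervalIntegrable_iff] at hint2 ⊢
    refine hint2.congr ?_
    have := (ae_restrict_iff' (measurableSet_uIoc (a := c) (b := d))).mpr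
      (haeeq.mono fun s h hm => (h hm).symm)
    exact this
  refine ⟨hII, ?_⟩
  have hinteq : (∫ s in c..d, (Lsph n (γ s : Amb n) (sVel n γ s) + 1)) = ∫ s in c..d, ℓ s :=
    intervalIntegral.integral_congr_ae haeeq
  rw [hinteq]
  -- main estimate via ε-regularization
  have main : ∀ ε : ℝ, ε ∈ Ioi (0:ℝ) →
      (-(2*Real.sqrt 2) * Real.sqrt (1 + rr d + ε))
        - (-(2*Real.sqrt 2) * Real.sqrt (1 + rr c + ε)) ≤ ∫ s in c..d, ℓ s := by
    intro ε hε
    rw [mem_Ioi] at hε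
    set F : ℝ → ℝ := fun t => -(2*Real.sqrt 2) * Real.sqrt (1 + rr t + ε) with hFdef
    have hFcont : ContinuousOn F (Icc c d) := by
      apply ContinuousOn.mul continuousOn_const
      exact Real.continuous_sqrt.comp_continuousOn
        ((continuousOn_const.add hrcont).add continuousOn_const)
    have hFderiv : ∀ t ∈ Ioo c d, HasDerivAt F
        (-(2*Real.sqrt 2) * (1/(2*Real.sqrt (1 + rr t + ε)) * (W t (Fin.last n)))) t := by
      intro t ht
      have hu : HasDerivAt (fun s => 1 + rr s + ε) (W t (Fin.last n)) t :=
        ((hrderiv t ht).const_add 1).add_const ε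
      have hpos : (1 + rr t + ε) ≠ 0 := ne_of_gt (by linarith [(hrmem t).1])
      exact ((Real.hasDerivAt_sqrt hpos).comp t hu).const_mul _
    set g : ℝ → ℝ := fun y => ∫ s in c..y, ℓ s with hgdef
    have hgcont : ContinuousOn g (Icc c d) := by
      have h := intervalIntegral.continuousOn_primitive_interval (μ := volume) (f := ℓ)
        (a := c) (b := d) (by rw [uIcc_of_le hcd.le]; exact hℓcont.integrableOn_Icc)
      rwa [uIcc_of_le hcd.le] at h
    have hgderiv : ∀ t ∈ Ioo c d, HasDerivAt g (ℓ t) t := by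
      intro t ht
      refine intervalIntegral.integral_hasDerivAt_right ?_ ?_ ?_
      · apply ContinuousOn.intervalIntegrable
        apply hℓcont.mono
        rw [uIcc_of_le ht.1.le]
        exact Icc_subset_Icc le_rfl ht.2.le
      · exact (hℓcont.mono Ioo_subset_Icc_self).stronglyMeasurableAtFilter isOpen_Ioo t ht
      · exact (hℓcont.mono Ioo_subset_Icc_self).continuousAt (Ioo_mem_nhds ht.1 ht.2)
    have hmono : MonotoneOn (fun y => g y - F y) (Icc c d) := by
      apply monotoneOn_of_deriv_nonneg (convex_Icc c d) (hgcont.sub hFcont)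
      · intro t ht; rw [interior_Icc] at ht
        exact ((hgderiv t ht).sub (hFderiv t ht)).differentiableAt.differentiableWithinAt
      · intro t ht; rw [interior_Icc] at ht
        rw [((hgderiv t ht).sub (hFderiv t ht)).deriv]
        have hb := arith_bound (r := rr t) (hrmem t).1 (hrmem t).2 hε (norm_nonneg (W t))
          (vel_coord_bound n (Γ t) (W t) (hnormΓ t) (horth t ht))
        have : ℓ t = ‖W t‖^2/2 - rr t + 1 := rfl
        rw [this]
        linarith
    have hDD : g c - F c ≤ g d - F d :=
      hmono (left_mem_Icc.mpr hcd.le) (right_mem_Icc.mpr hcd.le) hcd.le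
    have hgc : g c = 0 := intervalIntegral.integral_same
    have hgd : g d = ∫ s in c..d, ℓ s := rfl
    have hFc : F c = -(2*Real.sqrt 2) * Real.sqrt (1 + rr c + ε) := rfl
    have hFd : F d = -(2*Real.sqrt 2) * Real.sqrt (1 + rr d + ε) := rfl
    rw [hgc, hgd, hFc, hFd] at hDD
    linarith [hDD]
  have hlim : Tendsto (fun ε : ℝ =>
      (-(2*Real.sqrt 2) * Real.sqrt (1 + rr d + ε))
        - (-(2*Real.sqrt 2) * Real.sqrt (1 + rr c + ε)))
      (nhdsWithin 0 (Ioi 0))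
      (nhds ((-(2*Real.sqrt 2) * Real.sqrt (1 + rr d))
        - (-(2*Real.sqrt 2) * Real.sqrt (1 + rr c)))) := by
    have hcont : Continuous (fun ε : ℝ =>
        (-(2*Real.sqrt 2) * Real.sqrt (1 + rr d + ε))
          - (-(2*Real.sqrt 2) * Real.sqrt (1 + rr c + ε))) := by
      apply Continuous.sub <;>
      · apply Continuous.mul continuous_const
        apply Real.continuous_sqrt.comp
        fun_prop
    have h0 := (hcont.tendsto 0).mono_left (nhdsWithin_le_nhds (s := Ioi (0:ℝ)))
    simpa using h0
  have hfin := le_of_tendsto hlim (eventually_nhdsWithin_of_forall main)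
  have hrd : rr d = lastCoord n ((γ d : Amb n)) := rfl
  have hrc : rr c = lastCoord n ((γ c : Amb n)) := rfl
  rw [hrd, hrc] at hfin
  rw [uPlus_eq n (γ d), uPlus_eq n (γ c)]
  linarith [hfin]


lemma uPlus_dominated : sDominated n 1 (uPlus n) := by
  intro γ a b hab hγ
  obtain ⟨hcont, k, t, hmono, ht0, htl, hp⟩ := hγ
  set f : ℝ → ℝ := fun s => Lsph n (γ s : Amb n) (sVel n γ s) + 1 with hfdef
  set T : ℕ → ℝ := fun j => t ⟨min j k, Nat.lt_succ_of_le (min_le_right j k)⟩ with hTdef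
  have hT0 : T 0 = a := by
    rw [hTdef, ← ht0]
    beta_reduce
    congr 1
  have hTk : T k = b := by
    rw [hTdef, ← htl]
    beta_reduce
    congr 1
    apply Fin.ext
    show min k k = k
    omega
  have hpieces : ∀ j, j < k → IntervalIntegrable f volume (T j) (T (j+1)) ∧
      uPlus n (γ (T (j+1))) - uPlus n (γ (T j)) ≤ ∫ s in T j..T (j+1), f s := by
    intro j hj
    have e1 : T j = t ((⟨j, hj⟩ : Fin k).castSucc) := by
      rw [hTdef]; beta_reduce; congr 1; apply Fin.ext; show min j k = j; omega
    have e2 : T (j+1) = t ((⟨j, hj⟩ : Fin k).succ) := by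
      rw [hTdef]; beta_reduce; congr 1; apply Fin.ext; show min (j+1) k = j+1; omega
    rw [e1, e2]
    have hlt : t ((⟨j, hj⟩ : Fin k).castSucc) < t ((⟨j, hj⟩ : Fin k).succ) :=
      hmono Fin.castSucc_lt_succ
    exact piece_estimate n γ hlt (hp _)
  have hii : IntervalIntegrable f volume a b := by
    have h := IntervalIntegrable.trans_iterate (a := T) (n := k)
      (fun j hj => (hpieces j hj).1)
    rwa [hT0, hTk] at h
  have hsum : ∑ j ∈ Finset.range k, ∫ s in T j..T (j+1), f s = ∫ s in a..b, f s := by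
    have h := intervalIntegral.sum_integral_adjacent_intervals (a := T) (μ := volume)
      (fun j hj => (hpieces j hj).1)
    rwa [hT0, hTk] at h
  have htel : uPlus n (γ b) - uPlus n (γ a)
      = ∑ j ∈ Finset.range k, (uPlus n (γ (T (j+1))) - uPlus n (γ (T j))) := by
    rw [Finset.sum_range_sub (fun j => uPlus n (γ (T j))) k, hT0, hTk]
  have hle : uPlus n (γ b) - uPlus n (γ a) ≤ ∫ s in a..b, f s := by
    rw [htel, ← hsum]
    exact Finset.sum_le_sum (fun j hj => (hpieces j (Finset.mem_range.mp hj)).2)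
  have hL : IntervalIntegrable (fun s => Lsph n (γ s : Amb n) (sVel n γ s)) volume a b := by
    have heq : (fun s => Lsph n (γ s : Amb n) (sVel n γ s)) = fun s => f s - 1 := by
      funext s; rw [hfdef]; ring
    rw [heq]; exact hii.sub intervalIntegrable_const
  have hfi : (∫ s in a..b, f s) = sAction n γ a b + (b - a) := by
    rw [hfdef]
    rw [intervalIntegral.integral_add hL intervalIntegrable_const,
      intervalIntegral.integral_const]
    simp [sAction, smul_eq_mul]
  rw [hfi] at hle
  linarith [hle]

end Helpers

/-- The critical value of the spherical pendulum equals `1`: the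
function `u₊(x) = ∫_{x_{n+1}}^1 √((2−2s)/(1−s²)) ds` is dominated by `L + 1`; conversely
any function dominated by `L + c` forces `c ≥ 1`; hence
`inf { c : ∃ u, u ≺ L + c } = 1`. -/
theorem critical_value_of_spherical_pendulum (hn : 1 ≤ n) :
    sDominated n 1 (uPlus n) ∧
      (∀ (c : ℝ) (u : Sph n → ℝ), sDominated n c u → 1 ≤ c) ∧
      sInf {c : ℝ | ∃ u : Sph n → ℝ, sDominated n c u} = 1 := by
  have part2 : ∀ (c : ℝ) (u : Sph n → ℝ), sDominated n c u → 1 ≤ c := by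
    intro c u hu
    have hpc : sPiecewiseC1On n (fun _ => northPole n) 0 1 := by
      refine ⟨continuousOn_const, 1, ![0, 1], ?_, ?_, ?_, ?_⟩
      · rw [Fin.strictMono_iff_lt_succ]
        intro i
        fin_cases i
        norm_num
      · rfl
      · rfl
      · intro i; exact contDiffOn_const
    have h := hu (fun _ => northPole n) 0 1 zero_le_one hpc
    have hvel : ∀ s : ℝ, sVel n (fun _ => northPole n) s = 0 := by
      intro s
      simp [sVel, deriv_const]
    have hlast : lastCoord n ((northPole n : Sph n) : Amb n) = 1 := by
      simp [lastCoord, northPole, EuclideanSpace.single_apply]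
    have haction : sAction n (fun _ => northPole n) 0 1 = -1 := by
      have : (fun s : ℝ => Lsph n ((northPole n : Sph n) : Amb n)
          (sVel n (fun _ => northPole n) s)) = fun _ : ℝ => (-1 : ℝ) := by
        funext s
        rw [Lsph, hvel s, hlast]
        simp
      rw [sAction, this, intervalIntegral.integral_const]
      norm_num
    rw [haction] at h
    simp at h
    linarith
  refine ⟨uPlus_dominated n, part2, ?_⟩
  have hmem : (1:ℝ) ∈ {c : ℝ | ∃ u : Sph n → ℝ, sDominated n c u} :=
    ⟨uPlus n, uPlus_dominated n⟩
  apply le_antisymm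
  · exact csInf_le ⟨1, fun c hc => by obtain ⟨u, hu⟩ := hc; exact part2 c u hu⟩ hmem
  · exact le_csInf ⟨1, hmem⟩ (fun c hc => by obtain ⟨u, hu⟩ := hc; exact part2 c u hu)


end SphericalPendulum
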